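/- In the conformal geometric algebra Cl(3,1) of the plane, the elements S = e₁e and T = 1 + n e₁/2 (where n = e + ē) satisfy S² = -1 and (ST)³ = -1; hence their images in the conformal group (where ±X act identically) satisfy the modular group relations S² = I and (ST)³ = I. -/
import Mathlib


noncomputable section
open CliffordAlgebra

/-- The quadratic form of signature (+,+,+,-) for the conformal geometric algebra of the
plane: generators e₁, e₂, e, ē with e₁² = e₂² = e² = 1 and ē² = -1. -/
def Q31 : QuadraticForm ℝ (Fin 4 → ℝ) :=
  QuadraticMap.weightedSumSquares ℝ ![(1 : ℝ), 1, 1, -1]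

/-- The conformal geometric algebra Cl(3,1) of the plane. -/
abbrev CGA := CliffordAlgebra Q31

/-- The generators: `g 0 = e₁`, `g 1 = e₂`, `g 2 = e`, `g 3 = ē`. -/
def g (i : Fin 4) : CGA := ι Q31 (Pi.single i 1)

/-- The null vector `n = e + ē`. -/
def nv : CGA := g 2 + g 3

/-- The null vector `n̄ = e - ē`. -/
def nbv : CGA := g 2 - g 3

private lemma Q31_single (i : Fin 4) : Q31 (Pi.single i 1) = ![(1:ℝ),1,1,-1] i := by
  fin_cases i <;>
    simp [Q31, QuadraticMap.weightedSumSquares_apply, Fin.sum_univ_four, Pi.single_apply]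

private lemma gsq0 : g 0 * g 0 = 1 := by
  rw [g, ι_sq_scalar, Q31_single]; simp
private lemma gsq2 : g 2 * g 2 = 1 := by
  rw [g, ι_sq_scalar, Q31_single]; simp
private lemma gsq3 : g 3 * g 3 = -1 := by
  rw [g, ι_sq_scalar, Q31_single]
  simp [show ((![(1:ℝ),1,1,-1] : Fin 4 → ℝ) 3) = -1 from rfl, map_neg]

private lemma ganti (i j : Fin 4) (h : i ≠ j) : g i * g j = -(g j * g i) := by
  have hp : QuadraticMap.polar Q31 (Pi.single i 1) (Pi.single j 1) = 0 := by
    fin_cases i <;> fin_cases j <;> first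
      | exact absurd rfl h
      | simp [QuadraticMap.polar, Q31, QuadraticMap.weightedSumSquares_apply,
          Fin.sum_univ_four, Pi.single_apply]
  have := ι_mul_ι_add_swap (Q := Q31) (Pi.single i 1) (Pi.single j 1)
  rw [hp, map_zero] at this
  rw [g, g, eq_neg_iff_add_eq_zero]
  exact this

/-- In the conformal geometric algebra Cl(3,1) of the plane, the versors
`S = e₁e` and `T = 1 + n e₁/2` satisfy `S² = -1` and `(ST)³ = -1`; hence their images in the
conformal group (where `±A` act identically by sandwiching) satisfy the modular group
relations `S² = I` and `(ST)³ = I`. -/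
theorem modular_group_relations_in_CGA
    (S T : CGA) (hS : S = g 0 * g 2) (hT : T = 1 + (1 / 2 : ℝ) • (nv * g 0)) :
    S * S = -1 ∧ (S * T) ^ 3 = -1 ∧
    (∀ X : CGA, reverse (Q := Q31) (S * S) * X * (S * S) = X) ∧
    (∀ X : CGA, reverse (Q := Q31) ((S * T) ^ 3) * X * ((S * T) ^ 3) = X) := by
  have ha : g 0 * g 0 = 1 := gsq0
  have hb : g 2 * g 2 = 1 := gsq2
  have hc : g 3 * g 3 = -1 := gsq3
  have hba : g 2 * g 0 = -(g 0 * g 2) := ganti 2 0 (by decide)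
  have hca : g 3 * g 0 = -(g 0 * g 3) := ganti 3 0 (by decide)
  have hcb : g 3 * g 2 = -(g 2 * g 3) := ganti 3 2 (by decide)
  have ha2 : ∀ x : CGA, g 0 * (g 0 * x) = x := fun x => by
    rw [← mul_assoc, ha, one_mul]
  have hb2 : ∀ x : CGA, g 2 * (g 2 * x) = x := fun x => by
    rw [← mul_assoc, hb, one_mul]
  have hc2 : ∀ x : CGA, g 3 * (g 3 * x) = -x := fun x => by
    rw [← mul_assoc, hc, neg_one_mul]
  have hba2 : ∀ x : CGA, g 2 * (g 0 * x) = -(g 0 * (g 2 * x)) := fun x => by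
    rw [← mul_assoc, hba, neg_mul, mul_assoc]
  have hca2 : ∀ x : CGA, g 3 * (g 0 * x) = -(g 0 * (g 3 * x)) := fun x => by
    rw [← mul_assoc, hca, neg_mul, mul_assoc]
  have hcb2 : ∀ x : CGA, g 3 * (g 2 * x) = -(g 2 * (g 3 * x)) := fun x => by
    rw [← mul_assoc, hcb, neg_mul, mul_assoc]
  have hSS : S * S = -1 := by
    rw [hS]
    simp only [mul_assoc, hba2, hb2, mul_neg, neg_neg, ha2, ha, hb, mul_one, one_mul]
  have hM : S * T = (1/2 : ℝ) • (1 : CGA) + g 0 * g 2 + (1/2 : ℝ) • (g 2 * g 3) := by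
    rw [hS, hT, nv]
    simp only [mul_add, add_mul, mul_one, one_mul, mul_smul_comm, smul_mul_assoc, mul_assoc,
      hba2, hca2, hcb2, ha2, hb2, hc2, ha, hb, hc, hba, hca, hcb,
      mul_neg, neg_neg, smul_neg, mul_one]
    module
  have hM2 : (S * T) * (S * T) = (S * T) - 1 := by
    rw [hM]
    simp only [mul_add, add_mul, mul_one, one_mul, mul_smul_comm, smul_mul_assoc, mul_assoc,
      smul_smul, hba2, hca2, hcb2, ha2, hb2, hc2, ha, hb, hc, hba, hca, hcb,
      mul_neg, neg_neg, smul_neg, smul_add, mul_one]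
    module
  have hM3 : (S * T) ^ 3 = -1 := by
    have h3 : (S * T) ^ 3 = ((S * T) * (S * T)) * (S * T) := by
      rw [pow_succ, pow_two]
    rw [h3, hM2, sub_mul, one_mul, hM2]
    abel
  refine ⟨hSS, hM3, ?_, ?_⟩
  · intro X
    rw [hSS]
    simp
  · intro X
    rw [hM3]
    simp
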